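/- A continuous function f : X → Y is a polynomial of degree at most k (i.e., a finite sum f = ∑_{n=0}^k diag(ξ_n) with ξ_n continuous symmetric n-multilinear maps) if and only if Δ^{k+1}_u f(x) = 0 for all x ∈ X and all u ∈ X^{k+1}. -/

import Mathlib

open Finset

open Function

/-- The finite difference of order `m`:
`Δ^m_u f (x) = ∑_{α ∈ {0,1}^m} (-1)^{m-|α|} f (x + α·u)`. -/
def fdiff {X Y : Type*} [AddCommGroup X] [AddCommGroup Y] {m : ℕ}
    (u : Fin m → X) (f : X → Y) (x : X) : Y :=
  ∑ α : Fin m → Bool,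
    ((-1 : ℤ) ^ (m - (Finset.univ.filter fun i => α i).card)) •
      f (x + ∑ i, if α i then u i else 0)

section Basic
variable {X Y : Type*} [AddCommGroup X] [AddCommGroup Y]

lemma fdiff_zero (u : Fin 0 → X) (f : X → Y) (x : X) : fdiff u f x = f x := by
  simp [fdiff]

lemma fdiff_succ {m : ℕ} (u : Fin (m + 1) → X) (f : X → Y) (x : X) :
    fdiff u f x = fdiff (Fin.tail u) (fun y => f (y + u 0)) x - fdiff (Fin.tail u) f x := by
  classical
  unfold fdiff
  rw [← Equiv.sum_comp (Fin.consEquiv fun _ : Fin (m + 1) => Bool), Fintype.sum_prod_type,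
    Fintype.sum_bool]
  have hcard : ∀ (b : Bool) (β : Fin m → Bool),
      (Finset.univ.filter fun i => (Fin.consEquiv (fun _ => Bool)) (b, β) i).card
        = (if b then 1 else 0) + (Finset.univ.filter fun i => β i).card := by
    intro b β
    rw [Finset.card_filter, Finset.card_filter, Fin.sum_univ_succ]
    simp [Fin.consEquiv]
  have hpt : ∀ (b : Bool) (β : Fin m → Bool),
      (∑ i, if (Fin.consEquiv (fun _ => Bool)) (b, β) i then u i else 0)
        = (if b then u 0 else 0) + ∑ i, if β i then Fin.tail u i else 0 := by
    intro b β
    rw [Fin.sum_univ_succ]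
    simp [Fin.consEquiv, Fin.tail]
  rw [← Finset.sum_add_distrib, ← Finset.sum_sub_distrib]
  refine Finset.sum_congr rfl fun β _ => ?_
  simp only [hcard, hpt]
  norm_num
  have hc : (Finset.univ.filter fun i => β i).card ≤ m :=
    le_trans (Finset.card_filter_le _ _) (by simp)
  have e1 : m + 1 - (1 + (Finset.univ.filter fun i => β i).card)
      = m - (Finset.univ.filter fun i => β i).card := by omega
  have e2 : m + 1 - (Finset.univ.filter fun i => β i).card
      = (m - (Finset.univ.filter fun i => β i).card) + 1 := by omega
  rw [e1, e2, pow_succ, mul_neg_one, neg_smul, sub_eq_add_neg,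
    show x + (u 0 + ∑ i, if β i then Fin.tail u i else 0)
        = x + (∑ i, if β i then Fin.tail u i else 0) + u 0 by abel]

end Basic

section Basic2
variable {X Y : Type*} [AddCommGroup X] [AddCommGroup Y]

lemma fdiff_congr {m : ℕ} (u : Fin m → X) {f g : X → Y} (h : ∀ y, f y = g y) (x : X) :
    fdiff u f x = fdiff u g x := by
  have : f = g := funext h
  rw [this]

lemma fdiff_add_fun {m : ℕ} (u : Fin m → X) (f g : X → Y) (x : X) :
    fdiff u (fun y => f y + g y) x = fdiff u f x + fdiff u g x := by
  unfold fdiff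
  rw [← Finset.sum_add_distrib]
  exact Finset.sum_congr rfl fun α _ => smul_add _ _ _

lemma fdiff_sub_fun {m : ℕ} (u : Fin m → X) (f g : X → Y) (x : X) :
    fdiff u (fun y => f y - g y) x = fdiff u f x - fdiff u g x := by
  unfold fdiff
  rw [← Finset.sum_sub_distrib]
  exact Finset.sum_congr rfl fun α _ => smul_sub _ _ _

lemma fdiff_sum_fun {m : ℕ} {ι : Type*} (s : Finset ι) (u : Fin m → X) (g : ι → X → Y) (x : X) :
    fdiff u (fun y => ∑ n ∈ s, g n y) x = ∑ n ∈ s, fdiff u (g n) x := by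
  unfold fdiff
  rw [Finset.sum_comm]
  exact Finset.sum_congr rfl fun α _ => Finset.smul_sum

lemma fdiff_translate {m : ℕ} (u : Fin m → X) (f : X → Y) (v x : X) :
    fdiff u (fun y => f (y + v)) x = fdiff u f (x + v) := by
  unfold fdiff
  refine Finset.sum_congr rfl fun α _ => ?_
  congr 1
  abel

lemma fdiff_perm {m : ℕ} (u : Fin m → X) (f : X → Y) (x : X) (σ : Equiv.Perm (Fin m)) :
    fdiff (u ∘ σ) f x = fdiff u f x := by
  classical
  unfold fdiff
  refine Fintype.sum_equiv (σ.arrowCongr (Equiv.refl Bool)) _ _ fun α => ?_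
  have hcard : (Finset.univ.filter fun i => α i).card
      = (Finset.univ.filter fun i => (σ.arrowCongr (Equiv.refl Bool)) α i).card := by
    rw [Finset.card_filter, Finset.card_filter,
      ← Equiv.sum_comp σ (fun j => if (σ.arrowCongr (Equiv.refl Bool)) α j then 1 else 0)]
    refine Finset.sum_congr rfl fun i _ => ?_
    simp [Equiv.arrowCongr]
  have hpt : (∑ i, if α i then (u ∘ σ) i else 0)
      = ∑ i, if (σ.arrowCongr (Equiv.refl Bool)) α i then u i else 0 := by
    rw [← Equiv.sum_comp σ (fun j => if (σ.arrowCongr (Equiv.refl Bool)) α j then u j else 0)]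
    refine Finset.sum_congr rfl fun i _ => ?_
    simp [Equiv.arrowCongr]
  rw [hcard, hpt]

lemma fdiff_succ' {m : ℕ} (c : X) (w : Fin m → X) (f : X → Y) (x : X) :
    fdiff (Fin.cons c w) f x = fdiff w (fun y => f (y + c) - f y) x := by
  rw [fdiff_succ]
  simp only [Fin.tail_cons, Fin.cons_zero]
  rw [fdiff_sub_fun]

end Basic2

section Comb

lemma neg_one_pow_sub_real {a b : ℕ} (h : b ≤ a) :
    (-1 : ℝ) ^ (a - b) = (-1) ^ a * (-1) ^ b := by
  rw [← pow_add]
  have : a + b = (a - b) + 2 * b := by omega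
  rw [this, pow_add, pow_mul]
  norm_num

lemma signsum {n : ℕ} (S : Finset (Fin n)) :
    ∑ α : Fin n → Bool,
      ((-1 : ℝ) ^ (n - (Finset.univ.filter fun i => α i).card)
        * (if ∀ i ∈ S, α i then 1 else 0))
      = if S = Finset.univ then 1 else 0 := by
  classical
  simp only [mul_ite, mul_one, mul_zero]
  rw [← Finset.sum_filter]
  have key : ∑ α ∈ Finset.univ.filter (fun α : Fin n → Bool => ∀ i ∈ S, α i),
      (-1 : ℝ) ^ (n - (Finset.univ.filter fun i => α i).card)
      = ∑ U ∈ Sᶜ.powerset, (-1 : ℝ) ^ (n - S.card - U.card) := by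
    refine Finset.sum_nbij' (fun α => (Finset.univ.filter fun i => α i) \ S)
      (fun U => fun i => decide (i ∈ S ∪ U)) ?_ ?_ ?_ ?_ ?_
    · intro α hα
      simp only [Finset.mem_powerset]
      intro i hi
      simp only [Finset.mem_sdiff] at hi
      simp [hi.2]
    · intro U hU
      simp only [Finset.mem_powerset] at hU
      simp only [Finset.mem_filter, Finset.mem_univ, true_and]
      intro i hi
      simp [Finset.mem_union, hi]
    · intro α hα
      simp only [Finset.mem_filter, Finset.mem_univ, true_and] at hα
      funext i
      have : S ∪ (Finset.univ.filter fun i => α i) \ S = Finset.univ.filter fun i => α i := by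
        apply Finset.union_sdiff_of_subset
        intro i hi
        simp [hα i hi]
      rw [this]
      simp only [Finset.mem_filter, Finset.mem_univ, true_and]
      cases h : α i <;> simp [h]
    · intro U hU
      simp only [Finset.mem_powerset] at hU
      have h1 : (Finset.univ.filter fun i => (decide (i ∈ S ∪ U) : Bool)) = S ∪ U := by
        ext i; simp
      dsimp only
      rw [h1, Finset.union_sdiff_cancel_left]
      rw [Finset.disjoint_left]
      intro a ha hb
      have := hU hb
      simp only [Finset.mem_compl] at this
      exact this ha
    · intro α hα
      simp only [Finset.mem_filter, Finset.mem_univ, true_and] at hα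
      have hsub : S ⊆ Finset.univ.filter fun i => α i := fun i hi => by simp [hα i hi]
      have : (Finset.univ.filter fun i => α i).card
          = S.card + ((Finset.univ.filter fun i => α i) \ S).card := by
        rw [Finset.card_sdiff_of_subset hsub]
        have := Finset.card_le_card hsub
        omega
      rw [this]
      congr 1
      omega
  rw [key]
  have hcompl : Sᶜ.card = n - S.card := by
    rw [Finset.card_compl]
    simp
  have key2 : ∀ U ∈ Sᶜ.powerset, (-1 : ℝ) ^ (n - S.card - U.card)
      = (-1 : ℝ) ^ (n - S.card) * (-1 : ℝ) ^ U.card := by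
    intro U hU
    refine neg_one_pow_sub_real ?_
    have := Finset.card_le_card (Finset.mem_powerset.mp hU)
    omega
  have key3 : ∑ U ∈ Sᶜ.powerset, (-1 : ℝ) ^ (n - S.card - U.card)
      = (-1 : ℝ) ^ (n - S.card) * ∑ U ∈ Sᶜ.powerset, (-1 : ℝ) ^ U.card := by
    rw [Finset.mul_sum]
    exact Finset.sum_congr rfl key2
  rw [key3]
  have hz : ∑ U ∈ Sᶜ.powerset, (-1 : ℝ) ^ U.card = if Sᶜ = ∅ then 1 else 0 := by
    have h := Finset.sum_powerset_neg_one_pow_card (α := Fin n) (x := Sᶜ)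
    have h2 := congrArg (fun z : ℤ => (z : ℝ)) h
    push_cast at h2
    convert h2 using 2
  rw [hz]
  by_cases hS : S = Finset.univ
  · subst hS
    simp
  · have : Sᶜ ≠ ∅ := by
      intro h
      exact hS (by simpa [Finset.compl_eq_empty_iff] using h)
    simp [hS, this]

end Comb

section Cont
variable {X Y : Type*} [NormedAddCommGroup X] [NormedSpace ℝ X]
  [NormedAddCommGroup Y] [NormedSpace ℝ Y]

lemma fdiff_continuous_u {m : ℕ} {f : X → Y} (hf : Continuous f) (x : X) :
    Continuous fun u : Fin m → X => fdiff u f x := by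
  unfold fdiff
  refine continuous_finset_sum _ fun α _ => Continuous.fun_const_smul ?_ _
  refine hf.comp (continuous_const.add (continuous_finset_sum _ fun i _ => ?_))
  by_cases h : α i
  · simpa [h] using continuous_apply i
  · simp only [h]
    simp
    exact continuous_const
end Cont

section Diag
variable {X Y : Type*} [NormedAddCommGroup X] [NormedSpace ℝ X]
  [NormedAddCommGroup Y] [NormedSpace ℝ Y]

lemma fdiff_diag {m n : ℕ} (ξ : ContinuousMultilinearMap ℝ (fun _ : Fin m => X) Y)
    (u : Fin n → X) (x : X) :
    fdiff u (fun y => ξ fun _ => y) x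
      = ∑ r ∈ Finset.univ.filter
            (fun r : Fin m → Option (Fin n) => ∀ i, ∃ j, r j = some i),
          ξ (fun j => (r j).elim x u) := by
  classical
  unfold fdiff
  have h2 : ∀ α : Fin n → Bool,
      ξ (fun _ : Fin m => x + ∑ i, if α i then u i else 0)
        = ∑ r : Fin m → Option (Fin n),
            ξ (fun j => (r j).elim x fun i => if α i then u i else 0) := by
    intro α
    have h1 : (fun _ : Fin m => x + ∑ i, if α i then u i else 0)
        = fun _ : Fin m => ∑ t : Option (Fin n),
            t.elim x (fun i => if α i then u i else 0) := by
      funext j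
      rw [Fintype.sum_option]
      simp
    rw [h1]
    exact ξ.toMultilinearMap.map_sum
      (g := fun (_ : Fin m) (t : Option (Fin n)) => t.elim x fun i => if α i then u i else 0)
  simp only [h2, Finset.smul_sum]
  rw [Finset.sum_comm]
  have h3 : ∀ (r : Fin m → Option (Fin n)) (α : Fin n → Bool),
      ξ (fun j => (r j).elim x fun i => if α i then u i else 0)
        = (if (∀ j, (r j).elim True fun i => (α i : Prop)) then (1 : ℝ) else 0)
            • ξ (fun j => (r j).elim x u) := by
    intro r α
    have e1 : (fun j => (r j).elim x fun i => if α i then u i else 0)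
        = fun j => ((r j).elim (1 : ℝ) fun i => if α i then 1 else 0) • ((r j).elim x u) := by
      funext j
      cases hr : r j with
      | none => simp
      | some i => by_cases h : α i <;> simp [h]
    rw [e1, ξ.map_smul_univ]
    congr 1
    have e2 : ∀ j, ((r j).elim (1 : ℝ) fun i => if α i then 1 else 0)
        = if ((r j).elim True fun i => (α i : Prop)) then 1 else 0 := by
      intro j
      cases r j with
      | none => simp
      | some i => by_cases h : α i <;> simp [h]
    calc ∏ j, ((r j).elim (1 : ℝ) fun i => if α i then 1 else 0)
        = ∏ j, if ((r j).elim True fun i => (α i : Prop)) then (1:ℝ) else 0 :=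
          Finset.prod_congr rfl fun j _ => e2 j
      _ = _ := by rw [Finset.prod_boole]; simp
  have h4 : ∀ r : Fin m → Option (Fin n),
      (∑ α : Fin n → Bool,
        ((-1 : ℤ) ^ (n - (Finset.univ.filter fun i => α i).card))
          • ξ (fun j => (r j).elim x fun i => if α i then u i else 0))
      = (if (Finset.univ.filter fun i => ∃ j, r j = some i) = Finset.univ
            then (1:ℝ) else 0) • ξ (fun j => (r j).elim x u) := by
    intro r
    calc ∑ α : Fin n → Bool,
        ((-1 : ℤ) ^ (n - (Finset.univ.filter fun i => α i).card))
          • ξ (fun j => (r j).elim x fun i => if α i then u i else 0)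
        = ∑ α : Fin n → Bool,
            ((-1 : ℝ) ^ (n - (Finset.univ.filter fun i => α i).card)
              * (if ∀ i ∈ (Finset.univ.filter fun i => ∃ j, r j = some i), α i
                  then 1 else 0)) • ξ (fun j => (r j).elim x u) := by
          refine Finset.sum_congr rfl fun α _ => ?_
          rw [h3 r α, ← Int.cast_smul_eq_zsmul ℝ, smul_smul]
          congr 2
          · push_cast; ring
          · congr 1
            simp only [Finset.mem_filter, Finset.mem_univ, true_and, eq_iff_iff]
            constructor
            · intro h i hi
              obtain ⟨j, hj⟩ := hi
              have := h j
              rw [hj] at this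
              exact this
            · intro h j
              cases hr : r j with
              | none => trivial
              | some i => exact h i ⟨j, hr⟩
      _ = _ := by rw [← Finset.sum_smul, signsum]
  refine (Finset.sum_congr rfl fun r _ => h4 r).trans ?_
  simp only [ite_smul, one_smul, zero_smul]
  rw [← Finset.sum_filter]
  refine Finset.sum_congr ?_ fun r _ => rfl
  ext r
  simp only [Finset.mem_filter, Finset.mem_univ, true_and]
  rw [Finset.eq_univ_iff_forall]
  simp

end Diag

section Diag2
variable {X Y : Type*} [NormedAddCommGroup X] [NormedSpace ℝ X]
  [NormedAddCommGroup Y] [NormedSpace ℝ Y]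

lemma fdiff_diag_zero {m n : ℕ} (hmn : m < n)
    (ξ : ContinuousMultilinearMap ℝ (fun _ : Fin m => X) Y) (u : Fin n → X) (x : X) :
    fdiff u (fun y => ξ fun _ => y) x = 0 := by
  classical
  rw [fdiff_diag]
  have : (Finset.univ.filter
      (fun r : Fin m → Option (Fin n) => ∀ i, ∃ j, r j = some i)) = ∅ := by
    rw [Finset.filter_eq_empty_iff]
    intro r _ hr
    have hinj : Function.Injective (fun i => (hr i).choose) := by
      intro i i' h
      dsimp only at h
      have h1 := (hr i).choose_spec
      have h2 := (hr i').choose_spec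
      rw [h] at h1
      rw [h1] at h2
      exact Option.some_injective _ h2
    have := Fintype.card_le_of_injective _ hinj
    simp only [Fintype.card_fin] at this
    omega
  rw [this, Finset.sum_empty]

lemma fdiff_diag_eq {m : ℕ} (ξ : ContinuousMultilinearMap ℝ (fun _ : Fin m => X) Y)
    (hsym : ∀ (σ : Equiv.Perm (Fin m)) (v : Fin m → X), ξ (v ∘ σ) = ξ v)
    (u : Fin m → X) (x : X) :
    fdiff u (fun y => ξ fun _ => y) x = (Nat.factorial m) • ξ u := by
  classical
  rw [fdiff_diag]
  have hbij : ∑ r ∈ Finset.univ.filter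
        (fun r : Fin m → Option (Fin m) => ∀ i, ∃ j, r j = some i),
      ξ (fun j => (r j).elim x u)
      = ∑ _σ : Equiv.Perm (Fin m), ξ u := by
    symm
    refine Finset.sum_bij (fun (σ : Equiv.Perm (Fin m)) _ => fun j => some (σ j))
      ?_ ?_ ?_ ?_
    · intro σ _
      simp only [Finset.mem_filter, Finset.mem_univ, true_and]
      intro i
      exact ⟨σ.symm i, by simp⟩
    · intro σ _ σ' _ h
      ext j
      exact congrArg Fin.val (by simpa using congrFun h j)
    · intro r hr
      simp only [Finset.mem_filter, Finset.mem_univ, true_and] at hr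
      have hc : ∀ i, r ((hr i).choose) = some i := fun i => (hr i).choose_spec
      have hinj : Function.Injective (fun i => (hr i).choose) := by
        intro i i' h
        dsimp only at h
        have h1 := hc i
        have h2 := hc i'
        rw [h] at h1
        rw [h1] at h2
        exact Option.some_injective _ h2
      have hbij := (Finite.injective_iff_bijective).mp hinj
      let e := Equiv.ofBijective _ hbij
      refine ⟨e.symm, Finset.mem_univ _, ?_⟩
      funext j
      have h1 : (fun i => (hr i).choose) (e.symm j) = j := e.apply_symm_apply j
      dsimp only at h1 ⊢
      have h2 := hc (e.symm j)
      symm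
      conv_lhs => rw [← h1]
      exact h2
    · intro σ _
      have : (fun j => (some (σ j)).elim x u) = u ∘ σ := rfl
      rw [this, hsym]
  rw [hbij, Finset.sum_const, Finset.card_univ, Fintype.card_perm, Fintype.card_fin]

end Diag2

section Main
variable {X Y : Type*} [NormedAddCommGroup X] [NormedSpace ℝ X]
  [NormedAddCommGroup Y] [NormedSpace ℝ Y]

theorem poly_of_fdiff : ∀ (k : ℕ) (f : X → Y), Continuous f →
    (∀ (x : X) (u : Fin (k + 1) → X), fdiff u f x = 0) →
    ∃ ξ : ∀ n : Fin (k + 1), ContinuousMultilinearMap ℝ (fun _ : Fin n => X) Y,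
      (∀ (n : Fin (k + 1)) (σ : Equiv.Perm (Fin n)) (v : Fin n → X),
        ξ n (v ∘ σ) = ξ n v) ∧
      ∀ x, f x = ∑ n : Fin (k + 1), ξ n (fun _ => x) := by
  intro k
  induction k with
  | zero =>
    intro f hf H
    have hconst : ∀ y, f y = f 0 := by
      intro y
      have h := H 0 (fun _ => y)
      rw [fdiff_succ, fdiff_zero, fdiff_zero] at h
      have := sub_eq_zero.mp h
      simpa using this
    refine ⟨Fin.lastCases (ContinuousMultilinearMap.constOfIsEmpty ℝ (fun _ : Fin 0 => X) (f 0))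
        (fun i => i.elim0), ?_, ?_⟩
    · intro n
      have hn : n = Fin.last 0 := by
        have h := n.isLt
        rw [Fin.ext_iff, Fin.val_last]
        omega
      subst hn
      intro σ v
      rfl
    · intro x
      rw [Fin.sum_univ_one]
      have h0 : (0 : Fin 1) = Fin.last 0 := by
        rw [Fin.ext_iff]
        simp
      rw [h0]
      dsimp only
      rw [Fin.lastCases_last]
      simp
      exact hconst x
  | succ k ih =>
    intro f hf H
    have C1 : ∀ (u : Fin (k + 1) → X) (x v : X), fdiff u f (x + v) = fdiff u f x := by
      intro u x v
      have h0 := H x (Fin.cons v u)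
      rw [fdiff_succ] at h0
      simp only [Fin.tail_cons, Fin.cons_zero] at h0
      rw [fdiff_translate] at h0
      exact sub_eq_zero.mp h0
    have Cconst : ∀ (u : Fin (k + 1) → X) (x : X), fdiff u f x = fdiff u f 0 := by
      intro u x
      have := C1 u 0 x
      rwa [zero_add] at this
    have Tadd0 : ∀ (w : Fin k → X) (a b : X) (x : X),
        fdiff (Fin.cons (a + b) w) f x
          = fdiff (Fin.cons a w) f x + fdiff (Fin.cons b w) f x := by
      intro w a b x
      rw [fdiff_succ', fdiff_succ', fdiff_succ']
      have key : ∀ y, f (y + (a + b)) - f y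
          = (f ((y + b) + a) - f (y + b)) + (f (y + b) - f y) := by
        intro y
        rw [sub_add_sub_cancel]
        congr 2
        abel
      rw [fdiff_congr w key, fdiff_add_fun]
      congr 1
      calc fdiff w (fun y => f (y + b + a) - f (y + b)) x
          = fdiff w (fun z => f (z + a) - f z) (x + b) :=
            fdiff_translate w (fun z => f (z + a) - f z) b x
        _ = fdiff (Fin.cons a w) f (x + b) := (fdiff_succ' a w f (x + b)).symm
        _ = fdiff (Fin.cons a w) f x := C1 _ x b
        _ = fdiff w (fun y => f (y + a) - f y) x := fdiff_succ' a w f x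
    set T : (Fin (k + 1) → X) → Y := fun u => fdiff u f 0 with hT
    have Tsym : ∀ (σ : Equiv.Perm (Fin (k + 1))) (u : Fin (k + 1) → X),
        T (u ∘ σ) = T u := fun σ u => fdiff_perm u f 0 σ
    have Tadd : ∀ (u : Fin (k + 1) → X) (i : Fin (k + 1)) (a b : X),
        T (Function.update u i (a + b))
          = T (Function.update u i a) + T (Function.update u i b) := by
      intro u i a b
      have hswap : ∀ c : X, Function.update u i c ∘ (Equiv.swap (0 : Fin (k + 1)) i)
          = Fin.cons c (Fin.tail (u ∘ (Equiv.swap (0 : Fin (k + 1)) i))) := by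
        intro c
        rw [Function.update_comp_equiv u (Equiv.swap (0 : Fin (k + 1)) i) i c]
        rw [Equiv.symm_swap, Equiv.swap_apply_right]
        conv_lhs => rw [← Fin.cons_self_tail (u ∘ (Equiv.swap (0 : Fin (k + 1)) i)),
          Fin.update_cons_zero]
      calc T (Function.update u i (a + b))
          = T (Function.update u i (a + b) ∘ (Equiv.swap (0 : Fin (k + 1)) i)) :=
            (Tsym _ _).symm
        _ = T (Fin.cons (a + b) (Fin.tail (u ∘ (Equiv.swap (0 : Fin (k + 1)) i)))) := by
            rw [hswap]
        _ = T (Fin.cons a (Fin.tail (u ∘ (Equiv.swap (0 : Fin (k + 1)) i))))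
            + T (Fin.cons b (Fin.tail (u ∘ (Equiv.swap (0 : Fin (k + 1)) i)))) :=
            Tadd0 _ a b 0
        _ = T (Function.update u i a ∘ (Equiv.swap (0 : Fin (k + 1)) i))
            + T (Function.update u i b ∘ (Equiv.swap (0 : Fin (k + 1)) i)) := by
            rw [hswap, hswap]
        _ = T (Function.update u i a) + T (Function.update u i b) := by
            rw [Tsym, Tsym]
    have Tcont : Continuous T := fdiff_continuous_u hf 0
    have Tsmul : ∀ (u : Fin (k + 1) → X) (i : Fin (k + 1)) (c : ℝ) (a : X),
        T (Function.update u i (c • a)) = c • T (Function.update u i a) := by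
      intro u i c a
      exact map_real_smul (AddMonoidHom.mk' (fun z => T (Function.update u i z))
        (fun a b => Tadd u i a b))
        (Tcont.comp (continuous_const.update i continuous_id)) c a
    let Tlin : MultilinearMap ℝ (fun _ : Fin (k + 1) => X) Y :=
      { toFun := T
        map_update_add' := by
          intro inst u i a b
          rw [Subsingleton.elim inst (instDecidableEqFin (k + 1))]
          exact Tadd u i a b
        map_update_smul' := by
          intro inst u i c a
          rw [Subsingleton.elim inst (instDecidableEqFin (k + 1))]
          exact Tsmul u i c a }
    let Tc : ContinuousMultilinearMap ℝ (fun _ : Fin (k + 1) => X) Y := ⟨Tlin, Tcont⟩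
    let ξtop : ContinuousMultilinearMap ℝ (fun _ : Fin (k + 1) => X) Y :=
      ((Nat.factorial (k + 1) : ℝ))⁻¹ • Tc
    have hξtop_sym : ∀ (σ : Equiv.Perm (Fin (k + 1))) (v : Fin (k + 1) → X),
        ξtop (v ∘ σ) = ξtop v := by
      intro σ v
      show ((Nat.factorial (k + 1) : ℝ))⁻¹ • Tc (v ∘ σ) = ((Nat.factorial (k + 1) : ℝ))⁻¹ • Tc v
      exact congrArg _ (Tsym σ v)
    have hdiag : ∀ (u : Fin (k + 1) → X) (x : X),
        fdiff u (fun y => ξtop fun _ => y) x = T u := by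
      intro u x
      rw [fdiff_diag_eq ξtop hξtop_sym u x]
      show (Nat.factorial (k + 1)) • (((Nat.factorial (k + 1) : ℝ))⁻¹ • Tc u) = T u
      rw [← Nat.cast_smul_eq_nsmul ℝ, smul_smul, mul_inv_cancel₀, one_smul]
      · rfl
      · exact_mod_cast Nat.factorial_ne_zero _
    set g : X → Y := fun y => f y - ξtop (fun _ => y) with hg
    have hgc : Continuous g := hf.sub (ξtop.cont.comp (continuous_pi fun _ => continuous_id))
    have hg0 : ∀ (x : X) (u : Fin (k + 1) → X), fdiff u g x = 0 := by
      intro x u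
      rw [hg, fdiff_sub_fun, hdiag, Cconst]
      exact sub_self _
    obtain ⟨ξ', hsym', hrep'⟩ := ih g hgc hg0
    refine ⟨Fin.lastCases ξtop ξ', ?_, ?_⟩
    · intro n
      induction n using Fin.lastCases with
      | last =>
        intro σ v
        simp only [Fin.lastCases_last]
        exact hξtop_sym σ v
      | cast i =>
        intro σ v
        simp only [Fin.lastCases_castSucc]
        exact hsym' i σ v
    · intro x
      rw [Fin.sum_univ_castSucc]
      simp only [Fin.lastCases_last, Fin.lastCases_castSucc]
      have h5 := hrep' x
      rw [hg] at h5
      dsimp only at h5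
      exact sub_eq_iff_eq_add.mp h5

end Main

/-- A continuous function is a polynomial of degree `≤ k` iff all its finite
differences of order `k + 1` vanish. -/
theorem polynomial_iff_fdiff_vanish {X Y : Type*}
    [NormedAddCommGroup X] [NormedSpace ℝ X] [CompleteSpace X]
    [NormedAddCommGroup Y] [NormedSpace ℝ Y] [CompleteSpace Y]
    (k : ℕ) (f : X → Y) (hf : Continuous f) :
    (∃ ξ : ∀ n : Fin (k + 1), ContinuousMultilinearMap ℝ (fun _ : Fin n => X) Y,
        (∀ (n : Fin (k + 1)) (σ : Equiv.Perm (Fin n)) (v : Fin n → X),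
          ξ n (v ∘ σ) = ξ n v) ∧
        ∀ x, f x = ∑ n : Fin (k + 1), ξ n (fun _ => x)) ↔
      ∀ (x : X) (u : Fin (k + 1) → X), fdiff u f x = 0 := by
  constructor
  · rintro ⟨ξ, hsym, hrep⟩ x u
    rw [fdiff_congr u hrep x, fdiff_sum_fun]
    refine Finset.sum_eq_zero fun n _ => ?_
    exact fdiff_diag_zero n.isLt (ξ n) u x
  · intro H
    exact poly_of_fdiff k f hf H
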